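/- Let r and s be positive integers that are relatively prime. Then the number of lattice paths that start at (0,0), consist of unit steps (1,0) and (0,1), end at (r,s), and stay weakly below the line r·y = s·x (i.e., every point (a,b) visited satisfies r·b ≤ s·a) equals C(r+s, s)/(r+s); equivalently, (r+s) times this number of paths equals the binomial coefficient C(r+s, s). -/

import Mathlib

/-- Cycle lemma application: the number of lattice paths from `(0,0)` to `(r,s)` with
unit steps east and north staying weakly below the line `r·y = s·x`. -/
noncomputable def subDiagonalPathCount (r s : ℕ) : ℕ :=
  Nat.card {w : Fin (r + s + 1) → ℕ × ℕ //
    w 0 = (0, 0) ∧ w (Fin.last (r + s)) = (r, s) ∧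
    (∀ k : Fin (r + s), w k.succ = w k.castSucc + (1, 0) ∨
      w k.succ = w k.castSucc + (0, 1)) ∧
    ∀ k : Fin (r + s + 1), r * (w k).2 ≤ s * (w k).1}

open Finset
open Fin.NatCast

namespace CycleAux

variable {n : ℕ} [NeZero n]

/-- count of indices `j < k` (cyclically) with `f j = b`. -/
def cnt (f : Fin n → Bool) (b : Bool) (k : ℕ) : ℕ :=
  ((Finset.range k).filter fun j : ℕ => f (j : Fin n) = b).card

lemma cnt_zero (f : Fin n → Bool) (b : Bool) : cnt f b 0 = 0 := by simp [cnt]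

lemma cnt_succ (f : Fin n → Bool) (b : Bool) (k : ℕ) :
    cnt f b (k + 1) = cnt f b k + if f (k : Fin n) = b then 1 else 0 := by
  unfold cnt
  rw [Finset.range_add_one, Finset.filter_insert]
  split
  · rw [Finset.card_insert_of_notMem (by simp)]
  · rfl

lemma cnt_true_add_false (f : Fin n → Bool) (k : ℕ) :
    cnt f true k + cnt f false k = k := by
  induction k with
  | zero => simp [cnt_zero]
  | succ k ih =>
    rw [cnt_succ, cnt_succ]
    cases h : f (k : Fin n) <;> simp [h] <;> omega

lemma cnt_add_period (f : Fin n → Bool) (b : Bool) (t : ℕ) :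
    cnt f b (t + n) = cnt f b t + cnt f b n := by
  induction t with
  | zero => simp [cnt_zero]
  | succ t ih =>
    have hc : ((t + n : ℕ) : Fin n) = (t : Fin n) := by
      push_cast [Fin.natCast_self]; exact add_zero _
    have : t + 1 + n = (t + n) + 1 := by omega
    rw [this, cnt_succ, ih, cnt_succ, hc]; omega

/-- rotation by `i`. -/
def rot (i : Fin n) (f : Fin n → Bool) : Fin n → Bool := fun j => f (j + i)

lemma rot_rot (i i' : Fin n) (f : Fin n → Bool) :
    rot i (rot i' f) = rot (i + i') f := by
  funext j; simp [rot, add_assoc]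

lemma rot_zero (f : Fin n → Bool) : rot 0 f = f := by funext j; simp [rot]

lemma cnt_rot (i : Fin n) (f : Fin n → Bool) (b : Bool) (k : ℕ) :
    cnt (rot i f) b k + cnt f b i.val = cnt f b (i.val + k) := by
  induction k with
  | zero => simp [cnt_zero]
  | succ k ih =>
    have hc : rot i f (k : Fin n) = f ((i.val + k : ℕ) : Fin n) := by
      simp [rot]
      congr 1
      push_cast [Fin.cast_val_eq_self]
      exact add_comm _ _
    have : i.val + (k + 1) = (i.val + k) + 1 := by omega
    rw [this, cnt_succ, cnt_succ, hc] at *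
    omega

/-- the height function: `s·(#east) − r·(#north)` after `k` steps. -/
def P (r s : ℕ) (f : Fin n → Bool) (k : ℕ) : ℤ :=
  (s : ℤ) * cnt f true k - (r : ℤ) * cnt f false k

lemma P_zero (r s : ℕ) (f : Fin n → Bool) : P r s f 0 = 0 := by simp [P, cnt_zero]

lemma P_eq (r s : ℕ) (hn : n = r + s) (f : Fin n → Bool) (k : ℕ) :
    P r s f k = (s : ℤ) * k - (n : ℤ) * cnt f false k := by
  have h := cnt_true_add_false f k
  unfold P
  have h1 : (cnt f true k : ℤ) = (k : ℤ) - (cnt f false k : ℤ) := by omega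
  have h2 : (n : ℤ) = (r : ℤ) + s := by exact_mod_cast congrArg Nat.cast hn
  linear_combination (s : ℤ) * h1 + (cnt f false k : ℤ) * h2

lemma P_total (r s : ℕ) (hn : n = r + s) (f : Fin n → Bool)
    (hcnt : cnt f false n = s) : P r s f n = 0 := by
  rw [P_eq r s hn, hcnt, hn]; push_cast; ring

lemma P_add_period (r s : ℕ) (f : Fin n → Bool) (t : ℕ) :
    P r s f (t + n) = P r s f t + P r s f n := by
  unfold P
  rw [cnt_add_period, cnt_add_period]; push_cast; ring

lemma P_rot (r s : ℕ) (i : Fin n) (f : Fin n → Bool) (k : ℕ) :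
    P r s (rot i f) k = P r s f (i.val + k) - P r s f i.val := by
  unfold P
  have ht := cnt_rot i f true k
  have hf := cnt_rot i f false k
  have ht' : (cnt (rot i f) true k : ℤ) = (cnt f true (i.val + k) : ℤ) - (cnt f true i.val : ℤ) := by
    omega
  have hf' : (cnt (rot i f) false k : ℤ) = (cnt f false (i.val + k) : ℤ) - (cnt f false i.val : ℤ) := by
    omega
  rw [ht', hf']; ring

/-- distinct partial sums below the diagonal, via coprimality. -/
lemma P_injOn (r s : ℕ) (hn : n = r + s) (hrs : Nat.Coprime r s)
    (f : Fin n → Bool) {k l : ℕ} (hk : k < n) (hl : l < n)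
    (h : P r s f k = P r s f l) : k = l := by
  rw [P_eq r s hn, P_eq r s hn] at h
  have hco : IsCoprime (n : ℤ) (s : ℤ) := by
    rw [Nat.isCoprime_iff_coprime, hn]
    exact (Nat.coprime_add_self_left).mpr hrs
  have hdvd : (n : ℤ) ∣ (s : ℤ) * ((k : ℤ) - l) := by
    refine ⟨(cnt f false k : ℤ) - cnt f false l, ?_⟩
    linarith [h]
  have hdvd' : (n : ℤ) ∣ ((k : ℤ) - l) := hco.dvd_of_dvd_mul_left hdvd
  have : ((k : ℤ) - l) = 0 := Int.eq_zero_of_abs_lt_dvd hdvd' (by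
    rw [abs_sub_lt_iff]; constructor <;> push_cast <;> omega)
  omega

def Good (r s : ℕ) (f : Fin n → Bool) : Prop := ∀ k ≤ n, 0 ≤ P r s f k

/-- Existence: rotating to the minimum gives a good sequence. -/
lemma exists_good_rot (r s : ℕ) (hn : n = r + s) (f : Fin n → Bool)
    (hcnt : cnt f false n = s) :
    ∃ m : Fin n, Good r s (rot m f) := by
  have hpos : 0 < n := Nat.pos_of_ne_zero (NeZero.ne n)
  obtain ⟨m, hm, hmin⟩ := Finset.exists_min_image (Finset.range n) (P r s f)
    ⟨0, by simpa using hpos⟩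
  rw [Finset.mem_range] at hm
  refine ⟨⟨m, hm⟩, fun k hk => ?_⟩
  rw [P_rot]
  simp only
  have : P r s f m ≤ P r s f (m + k) := by
    rcases lt_or_ge (m + k) n with h | h
    · exact hmin _ (Finset.mem_range.mpr h)
    · have h2 : m + k = (m + k - n) + n := by omega
      rw [h2, P_add_period, P_total r s hn f hcnt, add_zero]
      exact hmin _ (Finset.mem_range.mpr (by omega))
  linarith

/-- Uniqueness: a good sequence has no other good rotation. -/
lemma good_rot_eq_zero (r s : ℕ) (hn : n = r + s) (hrs : Nat.Coprime r s)
    (g : Fin n → Bool) (hcnt : cnt g false n = s)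
    (hg : Good r s g) (d : Fin n) (hd : Good r s (rot d g)) : d = 0 := by
  have hdn : d.val < n := d.isLt
  have h1 : 0 ≤ P r s (rot d g) (n - d.val) := hd _ (by omega)
  rw [P_rot] at h1
  have h2 : d.val + (n - d.val) = n := by omega
  rw [h2, P_total r s hn g hcnt] at h1
  have h3 : 0 ≤ P r s g d.val := hg _ (by omega)
  have h4 : P r s g d.val = P r s g 0 := by rw [P_zero]; linarith
  have := P_injOn r s hn hrs g hdn (Nat.pos_of_ne_zero (NeZero.ne n)) h4
  exact Fin.ext this

end CycleAux

namespace Part2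
open CycleAux

variable {n : ℕ} [NeZero n]

lemma natCast_mk {a : ℕ} (ha : a < n) : (a : Fin n) = ⟨a, ha⟩ := by
  have := Fin.cast_val_eq_self (⟨a, ha⟩ : Fin n)
  simpa using this

lemma cnt_univ (f : Fin n → Bool) (b : Bool) :
    cnt f b n = (Finset.univ.filter fun j => f j = b).card := by
  unfold cnt
  have himg : ((Finset.range n).filter fun j : ℕ => f (j : Fin n) = b)
      = (Finset.univ.filter fun j => f j = b).image Fin.val := by
    ext a
    simp only [Finset.mem_filter, Finset.mem_range, Finset.mem_image, Finset.mem_univ, true_and]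
    constructor
    · rintro ⟨ha, hb⟩
      exact ⟨⟨a, ha⟩, by rwa [natCast_mk ha] at hb, rfl⟩
    · rintro ⟨j, hj, rfl⟩
      exact ⟨j.isLt, by rwa [natCast_mk j.isLt, Fin.eta]⟩
  rw [himg, Finset.card_image_of_injective _ Fin.val_injective]

lemma cnt_rot_total (i : Fin n) (f : Fin n → Bool) (b : Bool) :
    cnt (rot i f) b n = cnt f b n := by
  have h1 := cnt_rot i f b n
  have h2 := cnt_add_period f b i.val
  omega

/-- number of all step sequences with `s` norths. -/
lemma card_all (s' : ℕ) :
    Nat.card {f : Fin n → Bool // cnt f false n = s'} = n.choose s' := by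
  have e1 : {f : Fin n → Bool // cnt f false n = s'}
      ≃ {f : Fin n → Bool // (Finset.univ.filter fun j => f j = false).card = s'} :=
    Equiv.subtypeEquivRight fun f => by rw [cnt_univ]
  have e2 : {f : Fin n → Bool // (Finset.univ.filter fun j => f j = false).card = s'}
      ≃ {t : Finset (Fin n) // t.card = s'} := by
    refine ⟨fun f => ⟨Finset.univ.filter fun j => f.1 j = false, f.2⟩,
      fun t => ⟨fun j => decide (j ∉ t.1), ?_⟩, ?_, ?_⟩
    · have : (Finset.univ.filter fun j => (decide (j ∉ t.1) : Bool) = false) = t.1 := by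
        ext j; simp
      rw [this]; exact t.2
    · rintro ⟨f, hf⟩
      apply Subtype.ext
      funext j
      simp only [Finset.mem_filter, Finset.mem_univ, true_and]
      cases h : f j <;> simp [h]
    · rintro ⟨t, ht⟩
      apply Subtype.ext
      ext j
      simp
  rw [Nat.card_congr (e1.trans e2), Nat.card_eq_fintype_card,
    Fintype.card_finset_len, Fintype.card_fin]

/-- the cycle lemma count. -/
lemma card_cycle (r s : ℕ) (hn : n = r + s) (hrs : Nat.Coprime r s) :
    n * Nat.card {f : Fin n → Bool // Good r s f ∧ cnt f false n = s} = n.choose s := by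
  rw [← card_all (n := n) s]
  set GoodT := {f : Fin n → Bool // Good r s f ∧ cnt f false n = s}
  set AllT := {f : Fin n → Bool // cnt f false n = s}
  let Φ : GoodT × Fin n → AllT := fun gi =>
    ⟨rot gi.2 gi.1.1, by rw [cnt_rot_total]; exact gi.1.2.2⟩
  have hbij : Function.Bijective Φ := by
    constructor
    · rintro ⟨⟨g, hg, hgc⟩, i⟩ ⟨⟨g', hg', hgc'⟩, i'⟩ h
      have h' : rot i g = rot i' g' := congrArg Subtype.val h
      have hdg : rot (-i' + i) g = g' := by
        rw [← rot_rot, h', rot_rot, neg_add_cancel, rot_zero]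
      have hd0 : (-i' + i) = 0 := by
        apply good_rot_eq_zero r s hn hrs g hgc hg
        rw [hdg]; exact hg'
      have hii : i' = i := by
        have := neg_add_eq_zero.mp hd0
        exact this
      have hgg : g = g' := by rw [← hdg, hd0, rot_zero]
      subst hii; subst hgg
      rfl
    · rintro ⟨f, hf⟩
      obtain ⟨m, hm⟩ := exists_good_rot r s hn f hf
      refine ⟨⟨⟨rot m f, hm, by rw [cnt_rot_total]; exact hf⟩, -m⟩, ?_⟩
      apply Subtype.ext
      show rot (-m) (rot m f) = f
      rw [rot_rot, neg_add_cancel, rot_zero]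
  rw [← Nat.card_eq_of_bijective Φ hbij]
  rw [Nat.card_prod, Nat.card_eq_fintype_card (α := Fin n), Fintype.card_fin, mul_comm]

end Part2

namespace Part3
open CycleAux Part2

variable {r s : ℕ} [NeZero (r + s)]

def PathCond (r s : ℕ) (w : Fin (r + s + 1) → ℕ × ℕ) : Prop :=
  w 0 = (0, 0) ∧ w (Fin.last (r + s)) = (r, s) ∧
    (∀ k : Fin (r + s), w k.succ = w k.castSucc + (1, 0) ∨
      w k.succ = w k.castSucc + (0, 1)) ∧
    ∀ k : Fin (r + s + 1), r * (w k).2 ≤ s * (w k).1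

def toPath (f : Fin (r + s) → Bool) : Fin (r + s + 1) → ℕ × ℕ :=
  fun k => (cnt f true k.val, cnt f false k.val)

lemma toPath_cond (f : Fin (r + s) → Bool) (hg : Good r s f)
    (hc : cnt f false (r + s) = s) : PathCond r s (toPath f) := by
  refine ⟨?_, ?_, ?_, ?_⟩
  · show ((cnt f true (0 : Fin (r+s+1)).val, cnt f false (0 : Fin (r+s+1)).val) : ℕ × ℕ) = (0,0)
    simp [cnt_zero]
  · show ((cnt f true (Fin.last (r+s)).val, cnt f false (Fin.last (r+s)).val) : ℕ × ℕ) = (r, s)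
    have h := cnt_true_add_false f (r + s)
    rw [Fin.val_last]
    have : cnt f true (r + s) = r := by omega
    rw [this, hc]
  · intro k
    have hv1 : (k.succ : Fin (r+s+1)).val = k.val + 1 := Fin.val_succ k
    have hv2 : (k.castSucc : Fin (r+s+1)).val = k.val := Fin.coe_castSucc k
    have hcast : ((k.val : ℕ) : Fin (r+s)) = k := Fin.cast_val_eq_self k
    unfold toPath
    rw [hv1, hv2, cnt_succ, cnt_succ, hcast]
    cases hfk : f k
    · right; simp [Prod.ext_iff, hfk]
    · left; simp [Prod.ext_iff, hfk]
  · intro k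
    have hk : k.val ≤ r + s := by omega
    have := hg k.val hk
    unfold P at this
    show r * cnt f false k.val ≤ s * cnt f true k.val
    have h2 : (r : ℤ) * cnt f false k.val ≤ (s : ℤ) * cnt f true k.val := by linarith
    exact_mod_cast h2

lemma toPath_injective (f g : Fin (r + s) → Bool) (h : toPath f = toPath (r := r) (s := s) g) :
    f = g := by
  funext j
  have h1 := congrFun h ⟨j.val + 1, by omega⟩
  have h2 := congrFun h ⟨j.val, by omega⟩
  unfold toPath at h1 h2
  simp only [Prod.ext_iff] at h1 h2
  have hcast : ((j.val : ℕ) : Fin (r+s)) = j := Fin.cast_val_eq_self j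
  have e1 : cnt f false (j.val + 1) = cnt g false (j.val + 1) := h1.2
  have e2 : cnt f false j.val = cnt g false j.val := h2.2
  rw [cnt_succ, cnt_succ, hcast] at e1
  cases hf : f j <;> cases hg : g j <;> rw [hf, hg] at e1 <;> simp at e1 <;> omega

lemma toPath_surjective (w : Fin (r + s + 1) → ℕ × ℕ) (hw : PathCond r s w) :
    ∃ f : Fin (r + s) → Bool, Good r s f ∧ cnt f false (r + s) = s ∧ toPath f = w := by
  obtain ⟨h0, hlast, hstep, hdiag⟩ := hw
  set f : Fin (r + s) → Bool := fun j => decide (w j.succ = w j.castSucc + (1, 0)) with hfdef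
  have key : ∀ k (hk : k ≤ r + s), w ⟨k, by omega⟩ = (cnt f true k, cnt f false k) := by
    intro k
    induction k with
    | zero => intro _; rw [show (⟨0, by omega⟩ : Fin (r+s+1)) = 0 from rfl, h0]; simp [cnt_zero]
    | succ k ih =>
      intro hk
      have hk' : k < r + s := by omega
      have hkk : k ≤ r + s := by omega
      set j : Fin (r + s) := ⟨k, hk'⟩ with hj
      have hjc : j.castSucc = ⟨k, by omega⟩ := rfl
      have hjs : j.succ = ⟨k + 1, by omega⟩ := rfl
      have hcast : ((k : ℕ) : Fin (r+s)) = j := natCast_mk hk'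
      rcases hstep j with h | h
      · have hfj : f j = true := by rw [hfdef]; simp only [decide_eq_true_iff]; exact h
        rw [← hjs, h, hjc, ih hkk, cnt_succ, cnt_succ, hcast, hfj]
        simp [Prod.ext_iff]
      · have hfj : f j = false := by
          rw [hfdef]
          simp only [decide_eq_false_iff_not]
          intro hcon
          rw [h] at hcon
          have := congrArg Prod.snd hcon
          simp at this
        rw [← hjs, h, hjc, ih hkk, cnt_succ, cnt_succ, hcast, hfj]
        simp [Prod.ext_iff]
  have hlast' : (r, s) = ((cnt f true (r+s), cnt f false (r+s)) : ℕ × ℕ) := by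
    rw [← key (r+s) le_rfl, show (⟨r+s, by omega⟩ : Fin (r+s+1)) = Fin.last (r+s) from rfl, hlast]
  have hcnt : cnt f false (r + s) = s := by
    have := congrArg Prod.snd hlast'
    simpa using this.symm
  refine ⟨f, ?_, hcnt, ?_⟩
  · intro k hk
    have := hdiag ⟨k, by omega⟩
    rw [key k hk] at this
    simp only at this
    unfold P
    have h2 : (r : ℤ) * cnt f false k ≤ (s : ℤ) * cnt f true k := by exact_mod_cast this
    linarith
  · funext k
    rw [← Fin.eta k k.isLt, key k.val (by omega)]
    rfl

lemma card_path_eq (r s : ℕ) [NeZero (r + s)] :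
    Nat.card {w : Fin (r + s + 1) → ℕ × ℕ // PathCond r s w}
      = Nat.card {f : Fin (r + s) → Bool // Good r s f ∧ cnt f false (r + s) = s} := by
  refine (Nat.card_eq_of_bijective
    (fun f => ⟨toPath f.1, toPath_cond f.1 f.2.1 f.2.2⟩) ⟨?_, ?_⟩).symm
  · rintro ⟨f, hf⟩ ⟨g, hg⟩ h
    exact Subtype.ext (toPath_injective f g (congrArg Subtype.val h))
  · rintro ⟨w, hw⟩
    obtain ⟨f, h1, h2, h3⟩ := toPath_surjective w hw
    exact ⟨⟨f, h1, h2⟩, Subtype.ext h3⟩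

end Part3


theorem subdiagonal_path_count (r s : ℕ) (hr : 0 < r) (hs : 0 < s)
    (hrs : Nat.Coprime r s) :
    (r + s) * subDiagonalPathCount r s = Nat.choose (r + s) s := by
  haveI : NeZero (r + s) := ⟨by omega⟩
  have h1 : subDiagonalPathCount r s
      = Nat.card {w : Fin (r + s + 1) → ℕ × ℕ // Part3.PathCond r s w} := rfl
  rw [h1, Part3.card_path_eq r s, Part2.card_cycle r s rfl hrs]
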